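/- Let H be a real Hilbert space and let C be a nonempty closed convex subset of H. Then the following are equivalent: (i) every firmly nonexpansive mapping T : C → C has a fixed point in C; (ii) C is bounded. -/

import Mathlib

open Set Bornology Filter Topology
open scoped NNReal

section Helpers

variable {H : Type*} [NormedAddCommGroup H] [InnerProductSpace ℝ H]


open Set

variable {H : Type*} [NormedAddCommGroup H] [InnerProductSpace ℝ H]

/-- expansion of the combination norm squared -/
lemma comb_sq (d D : H) (l : ℝ) :
    ‖(1 - l) • d + l • D‖ ^ 2
      = (1-l)^2 * ‖d‖^2 + 2*(1-l)*l*(inner ℝ d D : ℝ) + l^2 * ‖D‖^2 := by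
  rw [← real_inner_self_eq_norm_sq]
  simp [norm_add_sq_real, inner_add_add_self, real_inner_smul_left, real_inner_smul_right,
    real_inner_self_eq_norm_sq, real_inner_comm d D, norm_smul, mul_pow,
    Real.norm_eq_abs, sq_abs]
  ring

lemma firm_of_inner {d D : H} (h : ‖D‖^2 ≤ (inner ℝ d D : ℝ)) :
    ∀ l ∈ Ioo (0:ℝ) 1, ‖D‖ ≤ ‖(1 - l) • d + l • D‖ := by
  intro l hl
  have hDd : ‖D‖ ≤ ‖d‖ := by
    rcases eq_or_lt_of_le (norm_nonneg D) with h0 | h0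
    · nlinarith [norm_nonneg d]
    · have := real_inner_le_norm d D
      nlinarith
  have hsq : ‖D‖^2 ≤ ‖(1 - l) • d + l • D‖ ^ 2 := by
    rw [comb_sq]
    obtain ⟨hl0, hl1⟩ := hl
    have t1 : 0 ≤ 2*l*(1-l)*((inner ℝ d D : ℝ) - ‖D‖^2) := by
      apply mul_nonneg (by nlinarith) (by linarith)
    have t2 : 0 ≤ (1-l)^2*(‖d‖^2 - ‖D‖^2) := by
      apply mul_nonneg (sq_nonneg _)
      nlinarith [norm_nonneg d, norm_nonneg D]
    nlinarith
  nlinarith [norm_nonneg D, norm_nonneg ((1 - l) • d + l • D)]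

lemma inner_of_firm {d D : H}
    (h : ∀ l ∈ Ioo (0:ℝ) 1, ‖D‖ ≤ ‖(1 - l) • d + l • D‖) :
    ‖D‖^2 ≤ (inner ℝ d D : ℝ) := by
  by_contra hcon
  push_neg at hcon
  set δ : ℝ := ‖D‖^2 - (inner ℝ d D : ℝ) with hδ
  have hδpos : 0 < δ := by linarith
  set M : ℝ := ‖d - D‖^2 with hM
  have hM0 : 0 ≤ M := sq_nonneg _
  set l : ℝ := max (1/2) (1 - δ/(M+1)) with hldef
  have hl : l ∈ Ioo (0:ℝ) 1 := by
    constructor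
    · have : (1/2:ℝ) ≤ l := le_max_left _ _
      linarith
    · apply max_lt (by norm_num)
      have : 0 < δ/(M+1) := by positivity
      linarith
  have h1l : 1 - l ≤ δ/(M+1) := by
    have : 1 - δ/(M+1) ≤ l := le_max_right _ _
    linarith
  -- key inequality: 2*δ ≤ (1-l)*M
  have hmain := h l hl
  have hsq : ‖D‖^2 ≤ ‖(1 - l) • d + l • D‖ ^ 2 :=
    pow_le_pow_left₀ (norm_nonneg _) hmain 2
  rw [comb_sq] at hsq
  obtain ⟨hl0, hl1⟩ := hl
  have hpos : 0 < 1 - l := by linarith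
  have hB : 0 ≤ (1-l)*‖d‖^2 + 2*l*(inner ℝ d D : ℝ) - (1+l)*‖D‖^2 := by
    have hk : (1-l) * 0 ≤ (1-l) * ((1-l)*‖d‖^2 + 2*l*(inner ℝ d D : ℝ) - (1+l)*‖D‖^2) := by
      nlinarith
    exact le_of_mul_le_mul_left hk hpos
  have hMexp : M = ‖d‖^2 - 2*(inner ℝ d D : ℝ) + ‖D‖^2 := by
    rw [hM, ← real_inner_self_eq_norm_sq]
    simp [norm_sub_sq_real, inner_sub_sub_self, real_inner_self_eq_norm_sq, real_inner_comm d D]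
  have h2δ : 2*δ ≤ (1-l)*M := by rw [hδ, hMexp]; nlinarith
  have hd : (1-l)*M ≤ δ*M/(M+1) := by
    calc (1-l)*M ≤ δ/(M+1)*M := mul_le_mul_of_nonneg_right h1l hM0
    _ = δ*M/(M+1) := by ring
  have : δ*M/(M+1) < 2*δ := by
    rw [div_lt_iff₀ (by positivity)]
    nlinarith
  linarith


end Helpers

section Main

variable {H : Type*} [NormedAddCommGroup H] [InnerProductSpace ℝ H] [CompleteSpace H]




lemma exists_unbounded_functional {C : Set H} (hub : ¬ IsBounded C) :
    ∃ a : H, ∀ M : ℝ, ∃ c ∈ C, M < (inner ℝ a c : ℝ) := by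
  by_contra hcon
  push_neg at hcon
  apply hub
  -- pointwise bounds
  have hbd : ∀ x : H, ∃ B : ℝ, ∀ c : C, ‖(innerSL ℝ (c : H)) x‖ ≤ B := by
    intro x
    obtain ⟨M₁, h₁⟩ := hcon x
    obtain ⟨M₂, h₂⟩ := hcon (-x)
    refine ⟨max M₁ M₂, fun c => ?_⟩
    have e1 : (inner ℝ x (c:H) : ℝ) ≤ M₁ := h₁ c c.2
    have e2 : (inner ℝ (-x) (c:H) : ℝ) ≤ M₂ := h₂ c c.2
    rw [inner_neg_left] at e2
    have : (innerSL ℝ (c : H)) x = (inner ℝ x (c:H) : ℝ) := by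
      simp [innerSL_apply_apply, real_inner_comm]
    rw [this, Real.norm_eq_abs, abs_le]
    constructor
    · have := le_max_right M₁ M₂; linarith
    · exact le_trans e1 (le_max_left _ _)
  have := banach_steinhaus (g := fun c : C => innerSL ℝ (c : H)) (fun x => hbd x)
  obtain ⟨C', hC'⟩ := this
  rw [isBounded_iff_forall_norm_le]
  refine ⟨C', fun c hc => ?_⟩
  have := hC' ⟨c, hc⟩
  rwa [innerSL_apply_norm] at this




lemma exists_proj {C : Set H} (hne : C.Nonempty) (hclosed : IsClosed C)
    (hconv : Convex ℝ C) :
    ∃ P : H → H, ∀ u, P u ∈ C ∧ ∀ w ∈ C, (inner ℝ (u - P u) (w - P u) : ℝ) ≤ 0 := by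
  have hcpl : IsComplete C := hclosed.isComplete
  choose P hPmem hPi using fun u =>
    exists_norm_eq_iInf_of_complete_convex hne hcpl hconv u
  refine ⟨P, fun u => ⟨hPmem u, ?_⟩⟩
  exact (norm_eq_iInf_iff_real_inner_le_zero hconv (hPmem u)).mp (hPi u)

/-- key firmly-nonexpansive inequality for the shifted projection -/
lemma proj_firm {C : Set H} {P : H → H}
    (hP : ∀ u, P u ∈ C ∧ ∀ w ∈ C, (inner ℝ (u - P u) (w - P u) : ℝ) ≤ 0)
    (a x y : H) :
    ‖P (x + a) - P (y + a)‖^2 ≤ (inner ℝ (x - y) (P (x + a) - P (y + a)) : ℝ) := by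
  set v := P (x + a)
  set w := P (y + a)
  have h1 : (inner ℝ ((x+a) - v) (w - v) : ℝ) ≤ 0 := (hP (x+a)).2 w (hP (y+a)).1
  have h2 : (inner ℝ ((y+a) - w) (v - w) : ℝ) ≤ 0 := (hP (y+a)).2 v (hP (x+a)).1
  have e1 : ((x+a) - v) = (x - y) - (v - w) + ((y + a) - w) := by abel
  rw [e1, inner_add_left, inner_sub_left] at h1
  have e2 : (inner ℝ ((y+a) - w) (w - v) : ℝ) = - (inner ℝ ((y+a) - w) (v - w) : ℝ) := by
    rw [← inner_neg_right]; congr 1; abel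
  rw [e2] at h1
  have e3 : (inner ℝ (v - w) (w - v) : ℝ) = - ‖v - w‖^2 := by
    have e : w - v = -(v - w) := by abel
    rw [e, inner_neg_right, real_inner_self_eq_norm_sq]
  rw [e3] at h1
  have e4 : (inner ℝ (x - y) (w - v) : ℝ) = - (inner ℝ (x - y) (v - w) : ℝ) := by
    rw [← inner_neg_right]; congr 1; abel
  rw [e4] at h1
  linarith



lemma real_core (n m p q s : ℝ) (hn : 0 ≤ n) (hnm : n ≤ m) (hp : 0 ≤ p) (hq : 0 ≤ q)
    (hmon : n*p^2 + m*q^2 ≤ (n+m)*s) (hcs : s ≤ p*q) :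
    m^2*q^2 + n^2*p^2 - 2*(n*m)*s ≤ m^2*q^2 - n^2*p^2 := by
  have hm : 0 ≤ m := hn.trans hnm
  have key : (p - q)*(n*p - m*q) ≤ 0 := by
    nlinarith [mul_le_mul_of_nonneg_left hcs (by positivity : (0:ℝ) ≤ n+m)]
  have h1 : n*p ≤ m*q := by
    rcases le_total p q with h | h
    · exact mul_le_mul hnm h hp hm
    · rcases eq_or_lt_of_le h with he | hlt
      · rw [← he]
        exact mul_le_mul_of_nonneg_right hnm (he ▸ hq)
      · nlinarith [key]
  rcases eq_or_lt_of_le (by positivity : (0:ℝ) ≤ n + m) with h0 | h0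
  · have hn0 : n = 0 := by nlinarith
    simp [hn0]
  · have h2 : n^2*p^2*(n+m) ≤ n*m*s*(n+m) := by
      have h3 : n*m*(n*p^2 + m*q^2) ≤ n*m*((n+m)*s) :=
        mul_le_mul_of_nonneg_left hmon (mul_nonneg hn hm)
      have h4 : n*((n*p)*(n*p)) ≤ n*((m*q)*(m*q)) := by
        apply mul_le_mul_of_nonneg_left _ hn
        exact mul_le_mul h1 h1 (mul_nonneg hn hp) (mul_nonneg hm hq)
      nlinarith
    have h5 : n^2*p^2 ≤ n*m*s := le_of_mul_le_mul_right h2 h0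
    linarith


variable {H : Type*} [NormedAddCommGroup H] [InnerProductSpace ℝ H] [CompleteSpace H]

lemma fixed_point_of_bounded {C : Set H} (hne : C.Nonempty) (hclosed : IsClosed C)
    (hconv : Convex ℝ C) (hbdd : IsBounded C) (T : H → H) (hmap : Set.MapsTo T C C)
    (hfirm : ∀ x ∈ C, ∀ y ∈ C, ‖T x - T y‖^2 ≤ (inner ℝ (x - y) (T x - T y) : ℝ)) :
    ∃ x ∈ C, T x = x := by
  obtain ⟨R, hR⟩ := isBounded_iff_forall_norm_le.mp hbdd
  obtain ⟨u, huC⟩ := hne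
  -- nonexpansive
  have hnon : ∀ x ∈ C, ∀ y ∈ C, ‖T x - T y‖ ≤ ‖x - y‖ := by
    intro x hx y hy
    have h1 := hfirm x hx y hy
    have h2 := real_inner_le_norm (x - y) (T x - T y)
    rcases eq_or_lt_of_le (norm_nonneg (T x - T y)) with h0 | h0
    · rw [← h0]; exact norm_nonneg _
    · nlinarith
  haveI : Nonempty C := ⟨⟨u, huC⟩⟩
  haveI : CompleteSpace C := hclosed.completeSpace_coe
  -- the resolvent-type approximants
  have happrox : ∀ n : ℕ, ∃ y ∈ C, u - y = (n : ℝ) • (y - T y) := by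
    intro n
    have hc1 : (0:ℝ) ≤ 1/(n+1) := by positivity
    have hc2 : (0:ℝ) ≤ (n:ℝ)/(n+1) := by positivity
    have hc3 : (1/(n+1) : ℝ) + (n:ℝ)/(n+1) = 1 := by
      field_simp
      ring
    set S : C → C := fun x =>
      ⟨(1/(n+1) : ℝ) • u + ((n:ℝ)/(n+1)) • T x, hconv huC (hmap x.2) hc1 hc2 hc3⟩ with hS
    have hK1 : ((n : ℝ≥0)/(n+1)) < 1 := by
      rw [div_lt_one (by positivity)]
      exact lt_add_one _
    have hcontr : ContractingWith ((n : ℝ≥0)/(n+1)) S := by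
      refine ⟨hK1, LipschitzWith.of_dist_le_mul fun x y => ?_⟩
      simp only [Subtype.dist_eq, hS]
      simp only [dist_eq_norm]
      have e : ((1/(n+1) : ℝ) • u + ((n:ℝ)/(n+1)) • T x) -
          ((1/(n+1) : ℝ) • u + ((n:ℝ)/(n+1)) • T y) = ((n:ℝ)/(n+1)) • (T x - T y) := by
        rw [smul_sub]; abel
      rw [e, norm_smul]
      have : ‖((n:ℝ)/(n+1))‖ = ((n : ℝ≥0)/(n+1) : ℝ≥0) := by
        simp [Real.norm_eq_abs, abs_of_nonneg hc2, NNReal.coe_div, abs_div]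
        push_cast
        rw [abs_of_pos (by positivity : (0:ℝ) < (n:ℝ)+1)]
      rw [this]
      exact mul_le_mul_of_nonneg_left (hnon x x.2 y y.2) (by positivity)
    obtain ⟨y, hy⟩ : ∃ y : C, S y = y := ⟨hcontr.fixedPoint S, hcontr.fixedPoint_isFixedPt⟩
    refine ⟨(y : H), y.2, ?_⟩
    have heq : (1/(n+1) : ℝ) • u + ((n:ℝ)/(n+1)) • T (y:H) = (y:H) := congrArg Subtype.val hy
    have hmul := congrArg (fun z => ((n:ℝ)+1) • z) heq
    simp only [smul_add, smul_smul] at hmul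
    have hne1 : ((n:ℝ)+1) ≠ 0 := by positivity
    rw [show ((n:ℝ)+1) * (1/(n+1)) = 1 by field_simp,
        show ((n:ℝ)+1) * ((n:ℝ)/(n+1)) = (n:ℝ) by field_simp, one_smul] at hmul
    -- hmul : u + n • T y = (n+1) • y
    have h2 : ((n:ℝ)+1) • (y:H) = (n:ℝ) • (y:H) + (y:H) := by
      rw [add_smul, one_smul]
    rw [h2] at hmul
    rw [smul_sub]
    exact sub_eq_sub_iff_add_eq_add.mpr hmul
  choose y hyC hyE using happrox
  set v : ℕ → H := fun n => y n - T (y n) with hv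
  have hR0 : 0 ≤ R := (norm_nonneg u).trans (hR u huC)
  have hD : ∀ n, ‖u - y n‖ ≤ 2*R := by
    intro n
    calc ‖u - y n‖ ≤ ‖u‖ + ‖y n‖ := norm_sub_le _ _
    _ ≤ 2*R := by have := hR u huC; have := hR (y n) (hyC n); linarith
  set A : ℕ → ℝ := fun n => ‖u - y n‖^2 with hA
  have hkey : ∀ n m : ℕ, n ≤ m → ‖y n - y m‖^2 ≤ A m - A n := by
    intro n m hnm
    have hcs : (inner ℝ (v m) (v n) : ℝ) ≤ ‖v n‖ * ‖v m‖ := by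
      have := real_inner_le_norm (v m) (v n); linarith [mul_comm ‖v m‖ ‖v n‖]
    have hmon0 : 0 ≤ (inner ℝ (y n - y m) (v n - v m) : ℝ) := by
      have e : v n - v m = (y n - y m) - (T (y n) - T (y m)) := by
        simp only [hv]; abel
      rw [e, inner_sub_right, real_inner_self_eq_norm_sq]
      have h1 := real_inner_le_norm (y n - y m) (T (y n) - T (y m))
      have h2 := hnon _ (hyC n) _ (hyC m)
      nlinarith [norm_nonneg (y n - y m)]
    have hrepn : y n = u - (n:ℝ) • v n := by rw [← hyE n]; abel
    have hrepm : y m = u - (m:ℝ) • v m := by rw [← hyE m]; abel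
    have hrepnm : y n - y m = (m:ℝ) • v m - (n:ℝ) • v n := by
      rw [hrepn, hrepm]; abel
    have hAm : A m - A n = (m:ℝ)^2*‖v m‖^2 - (n:ℝ)^2*‖v n‖^2 := by
      simp only [hA]
      rw [hyE n, hyE m, norm_smul, norm_smul]
      simp only [Real.norm_eq_abs, mul_pow, sq_abs, Nat.abs_cast]
      rfl
    have hnorm : ‖y n - y m‖^2
        = (m:ℝ)^2*‖v m‖^2 + (n:ℝ)^2*‖v n‖^2 - 2*((n:ℝ)*(m:ℝ))*(inner ℝ (v m) (v n) : ℝ) := by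
      rw [hrepnm, norm_sub_sq_real, real_inner_smul_left, real_inner_smul_right,
        norm_smul, norm_smul]
      simp only [Real.norm_eq_abs, mul_pow, sq_abs, Nat.abs_cast]
      ring
    have hmon' : (n:ℝ)*‖v n‖^2 + (m:ℝ)*‖v m‖^2 ≤ ((n:ℝ)+(m:ℝ))*(inner ℝ (v m) (v n) : ℝ) := by
      rw [hrepnm] at hmon0
      simp only [inner_sub_left, inner_sub_right, real_inner_smul_left,
        real_inner_self_eq_norm_sq] at hmon0
      rw [real_inner_comm (v m) (v n)] at hmon0
      nlinarith [hmon0]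
    rw [hnorm, hAm]
    exact real_core (n:ℝ) (m:ℝ) ‖v n‖ ‖v m‖ (inner ℝ (v m) (v n) : ℝ) (Nat.cast_nonneg n)
      (Nat.cast_le.mpr hnm) (norm_nonneg _) (norm_nonneg _) hmon' hcs
  have hAmono : Monotone A := by
    intro n m hnm
    have h1 := hkey n m hnm
    nlinarith [sq_nonneg ‖y n - y m‖]
  have hAbdd : BddAbove (Set.range A) := by
    refine ⟨(2*R)^2, fun a ⟨n, hn⟩ => ?_⟩
    rw [← hn]
    simp only [hA]
    exact pow_le_pow_left₀ (norm_nonneg _) (hD n) 2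
  have hAcauchy : CauchySeq A :=
    (tendsto_atTop_ciSup hAmono hAbdd).cauchySeq
  have hycauchy : CauchySeq y := by
    rw [Metric.cauchySeq_iff]
    intro ε hε
    obtain ⟨N, hN⟩ := Metric.cauchySeq_iff.mp hAcauchy (ε^2) (by positivity)
    refine ⟨N, fun m hm n hn => ?_⟩
    have step : ∀ a b : ℕ, N ≤ a → N ≤ b → a ≤ b → dist (y a) (y b) < ε := by
      intro a b ha hb hab
      have h1 := hkey a b hab
      have h2 := hN b hb a ha
      rw [Real.dist_eq] at h2
      have h3 : A b - A a < ε^2 := lt_of_le_of_lt (le_abs_self _) h2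
      rw [dist_eq_norm]
      nlinarith [norm_nonneg (y a - y b), sq_nonneg ‖y a - y b‖]
    rcases le_total m n with h | h
    · exact step m n hm hn h
    · rw [dist_comm]; exact step n m hn hm h
  obtain ⟨z, hz⟩ := cauchySeq_tendsto_of_complete hycauchy
  have hzC : z ∈ C := hclosed.mem_of_tendsto hz (Filter.Eventually.of_forall fun n => hyC n)
  have hv0 : Filter.Tendsto v atTop (nhds 0) := by
    apply squeeze_zero_norm' (a := fun n : ℕ => (2*R)/n)
    · filter_upwards [Filter.eventually_ge_atTop 1] with n hn
      have hnpos : (0:ℝ) < (n:ℝ) := by exact_mod_cast hn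
      rw [le_div_iff₀ hnpos]
      have h1 : ‖(n:ℝ) • v n‖ ≤ 2*R := by rw [← hyE n]; exact hD n
      rw [norm_smul, Real.norm_eq_abs, abs_of_pos hnpos] at h1
      linarith [mul_comm ‖v n‖ (n:ℝ)]
    · exact tendsto_const_div_atTop_nhds_zero_nat (2*R)
  have hTy : Filter.Tendsto (fun n => T (y n)) atTop (nhds z) := by
    have e : (fun n => T (y n)) = fun n => y n - v n := by
      funext n; simp only [hv]; abel
    rw [e]
    simpa using hz.sub hv0
  have hTz : Filter.Tendsto (fun n => T (y n)) atTop (nhds (T z)) := by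
    rw [← tendsto_sub_nhds_zero_iff]
    apply squeeze_zero_norm (fun n => hnon _ (hyC n) _ hzC)
    have h1 : Filter.Tendsto (fun n => y n - z) atTop (nhds 0) :=
      tendsto_sub_nhds_zero_iff.mpr hz
    simpa using h1.norm
  exact ⟨z, hzC, tendsto_nhds_unique hTz hTy⟩


end Main

/-- In a real Hilbert space, a nonempty closed convex set `C` has the
fixed point property for firmly nonexpansive mappings iff `C` is bounded. -/
theorem firmly_nonexpansive_fpp_iff_bounded
    {H : Type*} [NormedAddCommGroup H] [InnerProductSpace ℝ H] [CompleteSpace H]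
    (C : Set H) (hne : C.Nonempty) (hclosed : IsClosed C) (hconv : Convex ℝ C) :
    (∀ T : H → H, Set.MapsTo T C C →
      (∀ l ∈ Set.Ioo (0 : ℝ) 1, ∀ x ∈ C, ∀ y ∈ C,
        ‖T x - T y‖ ≤ ‖(1 - l) • (x - y) + l • (T x - T y)‖) →
      ∃ x ∈ C, T x = x) ↔ Bornology.IsBounded C := by
  constructor
  · intro hfpp
    by_contra hub
    obtain ⟨a, ha⟩ := exists_unbounded_functional hub
    obtain ⟨P, hP⟩ := exists_proj hne hclosed hconv
    set T : H → H := fun x => P (x + a) with hT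
    have hmap : Set.MapsTo T C C := fun x _ => (hP (x + a)).1
    have hfirm : ∀ l ∈ Set.Ioo (0 : ℝ) 1, ∀ x ∈ C, ∀ y ∈ C,
        ‖T x - T y‖ ≤ ‖(1 - l) • (x - y) + l • (T x - T y)‖ := by
      intro l hl x _ y _
      exact firm_of_inner (proj_firm hP a x y) l hl
    obtain ⟨x, hxC, hfix⟩ := hfpp T hmap hfirm
    obtain ⟨c, hcC, hc⟩ := ha (inner ℝ a x : ℝ)
    have h1 : (inner ℝ ((x + a) - P (x + a)) (c - P (x + a)) : ℝ) ≤ 0 := (hP (x + a)).2 c hcC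
    have hPx : P (x + a) = x := hfix
    rw [hPx] at h1
    have e : (x + a) - x = a := by abel
    rw [e, inner_sub_right] at h1
    linarith
  · intro hbdd T hmap hfirm
    apply fixed_point_of_bounded hne hclosed hconv hbdd T hmap
    intro x hx y hy
    exact inner_of_firm (fun l hl => hfirm l hl x hx y hy)
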